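/- arXiv:1609.07699 — 2 statements merged into one kernel-verified Lean document; each statement's English description precedes it below -/
import Mathlib

section
/- Let n ≥ 3 and let i, j, s be pairwise distinct indices in {1,…,n}. Then in the Steinberg group St_n(ℤ) one has [h_{ij}, h_{is}] = a, where a = h_{12}². -/
open scoped commutatorElement

namespace Steinberg

/-- Generators of the Steinberg group `St_n(ℤ)`: a symbol `x_{ij}(r)` for each
pair of distinct indices `i ≠ j` in `Fin n` and each integer `r`. -/
def Gen (n : ℕ) : Type := { p : Fin n × Fin n // p.1 ≠ p.2 } × ℤ

/-- The Steinberg relations: `x_{ij}(r) x_{ij}(s) = x_{ij}(r+s)`,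
`⁅x_{ij}(r), x_{jk}(s)⁆ = x_{ik}(rs)` for `i ≠ k`, and
`⁅x_{ij}(r), x_{pq}(s)⁆ = 1` for `j ≠ p`, `i ≠ q`. -/
def rels (n : ℕ) : Set (FreeGroup (Gen n)) :=
  { w | (∃ (i j : Fin n) (h : i ≠ j) (r s : ℤ),
      w = FreeGroup.of (⟨⟨i, j⟩, h⟩, r) * FreeGroup.of (⟨⟨i, j⟩, h⟩, s) *
          (FreeGroup.of (⟨⟨i, j⟩, h⟩, r + s))⁻¹) ∨
    (∃ (i j k : Fin n) (hij : i ≠ j) (hjk : j ≠ k) (hik : i ≠ k) (r s : ℤ),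
      w = ⁅FreeGroup.of ((⟨⟨i, j⟩, hij⟩ : { p : Fin n × Fin n // p.1 ≠ p.2 }), r),
           FreeGroup.of ((⟨⟨j, k⟩, hjk⟩ : { p : Fin n × Fin n // p.1 ≠ p.2 }), s)⁆ *
          (FreeGroup.of (⟨⟨i, k⟩, hik⟩, r * s))⁻¹) ∨
    (∃ (i j p q : Fin n) (hij : i ≠ j) (hpq : p ≠ q) (r s : ℤ),
      j ≠ p ∧ i ≠ q ∧
      w = ⁅FreeGroup.of ((⟨⟨i, j⟩, hij⟩ : { p : Fin n × Fin n // p.1 ≠ p.2 }), r),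
           FreeGroup.of ((⟨⟨p, q⟩, hpq⟩ : { p : Fin n × Fin n // p.1 ≠ p.2 }), s)⁆) }

/-- The Steinberg group `St_n(ℤ)`, presented by the generators `x_{ij}(r)` and the
Steinberg relations. -/
def St (n : ℕ) : Type := PresentedGroup (rels n)

instance (n : ℕ) : Group (St n) := by unfold St; infer_instance

/-- The generator `x_{ij}(r)` of `St_n(ℤ)`. -/
def x {n : ℕ} (i j : Fin n) (h : i ≠ j) (r : ℤ) : St n :=
  PresentedGroup.of (⟨⟨i, j⟩, h⟩, r)

/-- `ω_{ij} = x_{ij}(-1) x_{ji}(1) x_{ij}(-1)`. -/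
def w {n : ℕ} (i j : Fin n) (h : i ≠ j) : St n :=
  x i j h (-1) * x j i h.symm 1 * x i j h (-1)

/-- `h_{ij} = ω_{ij} ω_{ij}`. -/
def hElt {n : ℕ} (i j : Fin n) (h : i ≠ j) : St n := w i j h * w i j h

/-- The central element `a = h_{12}²` (indices `1,2` are `⟨0,_⟩, ⟨1,_⟩ : Fin n`). -/
def aElt {n : ℕ} (hn : 3 ≤ n) : St n :=
  hElt (⟨0, by omega⟩ : Fin n) (⟨1, by omega⟩ : Fin n) (by simp [Fin.ext_iff]) ^ 2

end Steinberg

namespace Steinberg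

variable {n : ℕ}

lemma rel_one {wd : FreeGroup (Gen n)} (hw : wd ∈ rels n) :
    PresentedGroup.mk (rels n) wd = 1 :=
  (QuotientGroup.eq_one_iff wd).mpr (Subgroup.subset_normalClosure hw)

lemma x_mul {i j : Fin n} (h : i ≠ j) (r s : ℤ) :
    x i j h r * x i j h s = x i j h (r + s) := by
  have hw : (FreeGroup.of ((⟨⟨i, j⟩, h⟩ : { p : Fin n × Fin n // p.1 ≠ p.2 }), r) *
      FreeGroup.of (⟨⟨i, j⟩, h⟩, s) * (FreeGroup.of (⟨⟨i, j⟩, h⟩, r + s))⁻¹) ∈ rels n :=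
    Or.inl ⟨i, j, h, r, s, rfl⟩
  have h1 := rel_one hw
  erw [map_mul, map_mul, map_inv] at h1
  exact mul_inv_eq_one.mp h1

lemma x_rel2 {i j k : Fin n} (hij : i ≠ j) (hjk : j ≠ k) (hik : i ≠ k) (r s : ℤ) :
    ⁅x i j hij r, x j k hjk s⁆ = x i k hik (r * s) := by
  have hw : (⁅FreeGroup.of ((⟨⟨i, j⟩, hij⟩ : { p : Fin n × Fin n // p.1 ≠ p.2 }), r),
      FreeGroup.of ((⟨⟨j, k⟩, hjk⟩ : { p : Fin n × Fin n // p.1 ≠ p.2 }), s)⁆ *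
      (FreeGroup.of (⟨⟨i, k⟩, hik⟩, r * s))⁻¹) ∈ rels n :=
    Or.inr (Or.inl ⟨i, j, k, hij, hjk, hik, r, s, rfl⟩)
  have h1 := rel_one hw
  erw [map_mul, map_inv, map_commutatorElement] at h1
  exact mul_inv_eq_one.mp h1

lemma x_rel3 {i j p q : Fin n} (hij : i ≠ j) (hpq : p ≠ q) (hjp : j ≠ p) (hiq : i ≠ q)
    (r s : ℤ) : Commute (x i j hij r) (x p q hpq s) := by
  have hw : (⁅FreeGroup.of ((⟨⟨i, j⟩, hij⟩ : { p : Fin n × Fin n // p.1 ≠ p.2 }), r),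
      FreeGroup.of ((⟨⟨p, q⟩, hpq⟩ : { p : Fin n × Fin n // p.1 ≠ p.2 }), s)⁆) ∈ rels n :=
    Or.inr (Or.inr ⟨i, j, p, q, hij, hpq, r, s, hjp, hiq, rfl⟩)
  have h1 := rel_one hw
  erw [map_commutatorElement] at h1
  exact commutatorElement_eq_one_iff_commute.mp h1

lemma x_zero {i j : Fin n} (h : i ≠ j) : x i j h 0 = 1 := by
  have := x_mul h 0 0
  norm_num at this
  exact this

lemma x_inv {i j : Fin n} (h : i ≠ j) (r : ℤ) : (x i j h r)⁻¹ = x i j h (-r) := by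
  apply inv_eq_of_mul_eq_one_right
  rw [x_mul]
  norm_num [x_zero]


/-- Conjugation `g a g⁻¹`. -/
def cjg {G : Type*} [Group G] (g a : G) : G := g * a * g⁻¹

lemma cj_mul {G : Type*} [Group G] (g a b : G) : cjg g (a * b) = cjg g a * cjg g b := by
  unfold cjg; group

lemma cj_split {G : Type*} [Group G] (g h a : G) : cjg (g * h) a = cjg g (cjg h a) := by
  unfold cjg; group

lemma cjA {i j k : Fin n} (hij : i ≠ j) (hjk : j ≠ k) (hik : i ≠ k) (r s : ℤ) :
    cjg (x i j hij r) (x j k hjk s) = x i k hik (r * s) * x j k hjk s := by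
  have hc := x_rel2 hij hjk hik r s
  unfold cjg
  rw [← hc]; group

lemma cjB {i j k : Fin n} (hij : i ≠ j) (hjk : j ≠ k) (hik : i ≠ k) (r s : ℤ) :
    cjg (x j k hjk s) (x i j hij r) = x i k hik (-(r * s)) * x i j hij r := by
  have hc := x_rel2 hij hjk hik r s
  unfold cjg
  rw [← x_inv, ← hc]; group

lemma cjC {i j p q : Fin n} (hij : i ≠ j) (hpq : p ≠ q) (hjp : j ≠ p) (hiq : i ≠ q)
    (r s : ℤ) : cjg (x i j hij r) (x p q hpq s) = x p q hpq s := by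
  have hc := (x_rel3 hij hpq hjp hiq r s).eq
  unfold cjg
  rw [hc]; group

lemma cj_w_def {p q : Fin n} (hpq : p ≠ q) (a : St n) :
    cjg (w p q hpq) a =
      cjg (x p q hpq (-1)) (cjg (x q p hpq.symm 1) (cjg (x p q hpq (-1)) a)) := by
  rw [w, cj_split, cj_split]

section omega_conj
variable {p q k : Fin n} (hpq : p ≠ q) (hpk : p ≠ k) (hqk : q ≠ k)

lemma swap_left (r s : ℤ) :
    x q k hqk r * x p k hpk s = x p k hpk s * x q k hqk r :=
  ((x_rel3 hqk hpk hpk.symm hqk r s).eq)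

lemma swap_kright (r s : ℤ) :
    x k q hqk.symm r * x k p hpk.symm s = x k p hpk.symm s * x k q hqk.symm r :=
  ((x_rel3 hqk.symm hpk.symm hqk hpk.symm r s).eq)

lemma fin1 {G : Type*} [Group G] (a b c e : G) (h1 : a * c = 1) (h2 : b * e = 1)
    (h3 : b * c = c * b) : a * b * c * (c * e) = c := by
  have hc : c = a⁻¹ := eq_inv_of_mul_eq_one_right h1
  have he : e = b⁻¹ := eq_inv_of_mul_eq_one_right h2
  subst hc he
  calc a * b * a⁻¹ * (a⁻¹ * b⁻¹) = a * (b * a⁻¹) * (a⁻¹ * b⁻¹) := by group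
    _ = a * (a⁻¹ * b) * (a⁻¹ * b⁻¹) := by rw [h3]
    _ = (b * a⁻¹) * b⁻¹ := by group
    _ = (a⁻¹ * b) * b⁻¹ := by rw [h3]
    _ = a⁻¹ := by group

lemma fin2 {G : Type*} [Group G] (a b c : G) (h1 : a * c = 1) (h3 : b * c = c * b) :
    a * b * c = b := by
  have hc : c = a⁻¹ := eq_inv_of_mul_eq_one_right h1
  subst hc
  calc a * b * a⁻¹ = a * (b * a⁻¹) := by group
    _ = a * (a⁻¹ * b) := by rw [h3]
    _ = b := by group

lemma cj_w_pk (r : ℤ) : cjg (w p q hpq) (x p k hpk r) = x q k hqk r := by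
  rw [cj_w_def, cjC hpq hpk hpq.symm hpk, cjA hpq.symm hpk hqk, cj_mul,
    cjA hpq hqk hpk, cjC hpq hpk hpq.symm hpk]
  norm_num
  rw [mul_assoc, swap_left hpk hqk, ← mul_assoc, x_mul]
  norm_num [x_zero]

lemma cj_w_qk (r : ℤ) : cjg (w p q hpq) (x q k hqk r) = x p k hpk (-r) := by
  rw [cj_w_def, cjA hpq hqk hpk, cj_mul, cjA hpq.symm hpk hqk,
    cjC hpq.symm hqk hpq hqk, cj_mul, cj_mul, cjA hpq hqk hpk,
    cjC hpq hpk hpq.symm hpk, cjA hpq hqk hpk]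
  norm_num
  exact fin1 _ _ _ _ (by rw [x_mul]; norm_num [x_zero]) (by rw [x_mul]; norm_num [x_zero])
    (swap_left hpk hqk (-r) (-r))

lemma cj_w_kp (r : ℤ) : cjg (w p q hpq) (x k p hpk.symm r) = x k q hqk.symm r := by
  rw [cj_w_def, cjB hpk.symm hpq hqk.symm, cj_mul, cjB hqk.symm hpq.symm hpk.symm,
    cjC hpq.symm hpk.symm hpk hpq.symm, cj_mul, cj_mul,
    cjC hpq hqk.symm hqk hpq, cjB hpk.symm hpq hqk.symm, cjB hpk.symm hpq hqk.symm]
  norm_num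
  exact fin1 _ _ _ _ (by rw [x_mul]; norm_num [x_zero]) (by rw [x_mul]; norm_num [x_zero])
    (swap_kright hpk hqk r (-r)).symm

lemma cj_w_kq (r : ℤ) : cjg (w p q hpq) (x k q hqk.symm r) = x k p hpk.symm (-r) := by
  rw [cj_w_def, cjC hpq hqk.symm hqk hpq, cjB hqk.symm hpq.symm hpk.symm,
    cj_mul, cjB hpk.symm hpq hqk.symm, cjC hpq hqk.symm hqk hpq]
  norm_num
  exact fin2 _ _ _ (by rw [x_mul]; norm_num [x_zero]) (swap_kright hpk hqk r (-r)).symm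

end omega_conj


/-- Exactly one of `a, b` lies in `{p, q}`. -/
def Cfg (p q a b : Fin n) : Prop :=
  ((a = p ∨ a = q) ∧ b ≠ p ∧ b ≠ q) ∨ ((b = p ∨ b = q) ∧ a ≠ p ∧ a ≠ q)

lemma Cfg.swap {p q a b : Fin n} (h : Cfg p q a b) : Cfg p q b a := Or.symm h

lemma cj_h_x (p q a b : Fin n) (hpq : p ≠ q) (hab : a ≠ b) (hcfg : Cfg p q a b) (r : ℤ) :
    cjg (hElt p q hpq) (x a b hab r) = x a b hab (-r) := by
  unfold hElt
  rw [cj_split]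
  rcases hcfg with ⟨ha | ha, hbp, hbq⟩ | ⟨hb | hb, hap, haq⟩
  · subst ha
    rw [cj_w_pk hpq hab (Ne.symm hbq), cj_w_qk hpq hab (Ne.symm hbq)]
  · subst ha
    rw [cj_w_qk hpq (Ne.symm hbp) hab, cj_w_pk hpq (Ne.symm hbp) hab]
  · subst hb
    rw [cj_w_kp hpq (Ne.symm hab) (Ne.symm haq), cj_w_kq hpq (Ne.symm hab) (Ne.symm haq)]
  · subst hb
    rw [cj_w_kq hpq (Ne.symm hap) (Ne.symm hab), cj_w_kp hpq (Ne.symm hap) (Ne.symm hab)]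

lemma cj_h_w (p q a b : Fin n) (hpq : p ≠ q) (hab : a ≠ b) (hcfg : Cfg p q a b) :
    cjg (hElt p q hpq) (w a b hab) = (w a b hab)⁻¹ := by
  have h1 := cj_h_x p q a b hpq hab hcfg
  have h2 := cj_h_x p q b a hpq hab.symm hcfg.swap
  rw [show w a b hab = x a b hab (-1) * x b a hab.symm 1 * x a b hab (-1) from rfl,
    cj_mul, cj_mul, h1, h2, mul_inv_rev, mul_inv_rev, x_inv, x_inv]
  rw [mul_assoc]

lemma cj_h_h (p q a b : Fin n) (hpq : p ≠ q) (hab : a ≠ b) (hcfg : Cfg p q a b) :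
    cjg (hElt p q hpq) (hElt a b hab) = (hElt a b hab)⁻¹ := by
  rw [show hElt a b hab = w a b hab * w a b hab from rfl, cj_mul,
    cj_h_w p q a b hpq hab hcfg, mul_inv_rev]

lemma comm_h (p q a b : Fin n) (hpq : p ≠ q) (hab : a ≠ b) (hcfg : Cfg p q a b) :
    ⁅hElt p q hpq, hElt a b hab⁆ = (hElt a b hab ^ 2)⁻¹ := by
  have h1 := cj_h_h p q a b hpq hab hcfg
  unfold cjg at h1
  rw [commutatorElement_def, h1, sq, mul_inv_rev]

lemma sq_inv' (p q a b : Fin n) (hpq : p ≠ q) (hab : a ≠ b)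
    (hcfg1 : Cfg p q a b) (hcfg2 : Cfg a b p q) :
    hElt a b hab ^ 2 = (hElt p q hpq ^ 2)⁻¹ := by
  have e1 := comm_h p q a b hpq hab hcfg1
  have e2 := comm_h a b p q hab hpq hcfg2
  have e3 : (hElt a b hab ^ 2)⁻¹ = hElt p q hpq ^ 2 := by
    rw [← e1, ← commutatorElement_inv, e2, inv_inv]
  exact inv_eq_iff_eq_inv.mp e3

lemma exists_third (hn : 3 ≤ n) (a b : Fin n) : ∃ k : Fin n, k ≠ a ∧ k ≠ b := by
  by_contra hcon
  push_neg at hcon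
  have hsub : (Finset.univ : Finset (Fin n)) ⊆ {a, b} := by
    intro k _
    rcases eq_or_ne k a with h | h
    · simp [h]
    · simp [hcon k h]
  have hcard := Finset.card_le_card hsub
  have h2 : ({a, b} : Finset (Fin n)).card ≤ 2 :=
    (Finset.card_insert_le _ _).trans (by simp)
  simp [Finset.card_univ] at hcard
  omega

lemma invol (hn : 3 ≤ n) (a b : Fin n) (hab : a ≠ b) :
    (hElt a b hab ^ 2)⁻¹ = hElt a b hab ^ 2 := by
  obtain ⟨k, hka, hkb⟩ := exists_third hn a b
  have h1 : hElt a b hab ^ 2 = (hElt a k hka.symm ^ 2)⁻¹ :=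
    sq_inv' a k a b hka.symm hab
      (Or.inl ⟨Or.inl rfl, hab.symm, hkb.symm⟩)
      (Or.inl ⟨Or.inl rfl, hka, hkb⟩)
  have h2 : hElt a k hka.symm ^ 2 = (hElt k b hkb ^ 2)⁻¹ :=
    sq_inv' k b a k hkb hka.symm
      (Or.inr ⟨Or.inl rfl, hka.symm, hab⟩)
      (Or.inl ⟨Or.inr rfl, hab.symm, hkb.symm⟩)
  have h3 : hElt a b hab ^ 2 = (hElt k b hkb ^ 2)⁻¹ :=
    sq_inv' k b a b hkb hab
      (Or.inr ⟨Or.inr rfl, hka.symm, hab⟩)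
      (Or.inr ⟨Or.inr rfl, hka, hkb⟩)
  conv_lhs => rw [h3]
  rw [inv_inv, h1, h2, inv_inv]

lemma eq_of_cfg (hn : 3 ≤ n) (p q a b : Fin n) (hpq : p ≠ q) (hab : a ≠ b)
    (hcfg1 : Cfg p q a b) (hcfg2 : Cfg a b p q) :
    hElt a b hab ^ 2 = hElt p q hpq ^ 2 := by
  rw [sq_inv' p q a b hpq hab hcfg1 hcfg2, invol hn p q hpq]

lemma A_eq (hn : 3 ≤ n) (a b c d : Fin n) (hab : a ≠ b) (hcd : c ≠ d) :
    hElt a b hab ^ 2 = hElt c d hcd ^ 2 := by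
  by_cases hac : a = c
  · subst hac
    by_cases hbd : b = d
    · subst hbd; rfl
    · exact eq_of_cfg hn a d a b hcd hab
        (Or.inl ⟨Or.inl rfl, hab.symm, hbd⟩)
        (Or.inl ⟨Or.inl rfl, hcd.symm, fun h => hbd h.symm⟩)
  · by_cases had : a = d
    · subst had
      by_cases hbc : b = c
      · subst hbc
        obtain ⟨k, hka, hkb⟩ := exists_third hn a b
        have h1 : hElt a b hab ^ 2 = hElt a k hka.symm ^ 2 :=
          eq_of_cfg hn a k a b hka.symm hab
            (Or.inl ⟨Or.inl rfl, hab.symm, hkb.symm⟩)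
            (Or.inl ⟨Or.inl rfl, hka, hkb⟩)
        have h2 : hElt b a hcd ^ 2 = hElt a k hka.symm ^ 2 :=
          eq_of_cfg hn a k b a hka.symm hcd
            (Or.inr ⟨Or.inl rfl, hab.symm, hkb.symm⟩)
            (Or.inl ⟨Or.inr rfl, hkb, hka⟩)
        rw [h1, h2]
      · exact eq_of_cfg hn c a a b hcd hab
          (Or.inl ⟨Or.inr rfl, hbc, hab.symm⟩)
          (Or.inr ⟨Or.inl rfl, hcd, fun h => hbc h.symm⟩)
    · by_cases hbc : b = c
      · subst hbc
        exact eq_of_cfg hn b d a b hcd hab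
          (Or.inr ⟨Or.inl rfl, hab, had⟩)
          (Or.inl ⟨Or.inr rfl, fun h => had h.symm, hcd.symm⟩)
      · by_cases hbd : b = d
        · subst hbd
          exact eq_of_cfg hn c b a b hcd hab
            (Or.inr ⟨Or.inr rfl, hac, hab⟩)
            (Or.inr ⟨Or.inr rfl, fun h => hac h.symm, hcd⟩)
        · have h1 : hElt a b hab ^ 2 = hElt a d had ^ 2 :=
            eq_of_cfg hn a d a b had hab
              (Or.inl ⟨Or.inl rfl, hab.symm, hbd⟩)
              (Or.inl ⟨Or.inl rfl, fun h => had h.symm, fun h => hbd h.symm⟩)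
          have h2 : hElt a d had ^ 2 = hElt c d hcd ^ 2 :=
            eq_of_cfg hn c d a d hcd had
              (Or.inr ⟨Or.inr rfl, hac, had⟩)
              (Or.inr ⟨Or.inr rfl, fun h => hac h.symm, hcd⟩)
          rw [h1, h2]

end Steinberg


open Steinberg in
/-- For `n ≥ 3` and pairwise distinct `i,j,s`, in `St_n(ℤ)` one has
`[h_{ij}, h_{is}] = a` where `a = h_{12}²`. -/
theorem steinberg_h_comm_eq_a (n : ℕ) (hn : 3 ≤ n) (i j s : Fin n)
    (hij : i ≠ j) (his : i ≠ s) (hjs : j ≠ s) :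
    ⁅hElt i j hij, hElt i s his⁆ = aElt hn := by
  rw [comm_h i j i s hij his (Or.inl ⟨Or.inl rfl, his.symm, hjs.symm⟩),
    invol hn i s his,
    A_eq hn i s (⟨0, by omega⟩ : Fin n) (⟨1, by omega⟩ : Fin n) his
      (by simp [Fin.ext_iff])]
  rfl
end

section
/- Let n ≥ 5 and let i, j, s, t be pairwise distinct indices in {1,…,n}. Then the normal subgroup of the Steinberg group St_n(ℤ) normally generated by the element h_{ij}·h_{st} contains the element a = h_{12}². -/
namespace Steinberg

open scoped commutatorElement

variable {n : ℕ}

private def mkS : FreeGroup (Gen n) →* St n := QuotientGroup.mk' _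

private lemma mk_rel {g : FreeGroup (Gen n)} (hg : g ∈ rels n) : mkS g = 1 :=
  (QuotientGroup.eq_one_iff g).2 (Subgroup.subset_normalClosure hg)

private lemma x_eq (i j : Fin n) (h : i ≠ j) (r : ℤ) :
    x i j h r = mkS (FreeGroup.of (⟨⟨i, j⟩, h⟩, r)) := rfl

private lemma xa {i j : Fin n} (hij : i ≠ j) (r s : ℤ) :
    x i j hij r * x i j hij s = x i j hij (r + s) := by
  have h1 := mk_rel (n := n) (Or.inl ⟨i, j, hij, r, s, rfl⟩)
  erw [map_mul, map_mul, map_inv] at h1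
  rw [x_eq, x_eq, x_eq]
  exact mul_inv_eq_one.mp h1

private lemma xm {i j k : Fin n} (hij : i ≠ j) (hjk : j ≠ k) (hik : i ≠ k) (r s : ℤ) :
    x i j hij r * x j k hjk s = x i k hik (r * s) * (x j k hjk s * x i j hij r) := by
  have h1 := mk_rel (n := n) (Or.inr (Or.inl ⟨i, j, k, hij, hjk, hik, r, s, rfl⟩))
  erw [map_mul, map_inv, map_commutatorElement] at h1
  have h2 : ⁅x i j hij r, x j k hjk s⁆ = x i k hik (r * s) := by
    rw [x_eq, x_eq, x_eq]; exact mul_inv_eq_one.mp h1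
  rw [← h2]; group

private lemma xs {i j p q : Fin n} (hij : i ≠ j) (hpq : p ≠ q) (hjp : j ≠ p)
    (hiq : i ≠ q) (r s : ℤ) :
    x i j hij r * x p q hpq s = x p q hpq s * x i j hij r := by
  have h1 := mk_rel (n := n)
    (Or.inr (Or.inr ⟨i, j, p, q, hij, hpq, r, s, hjp, hiq, rfl⟩))
  erw [map_commutatorElement] at h1
  have h2 : ⁅x i j hij r, x p q hpq s⁆ = 1 := by rw [x_eq, x_eq]; exact h1
  exact commutatorElement_eq_one_iff_mul_comm.mp h2

private lemma x0 {i j : Fin n} (hij : i ≠ j) : x i j hij 0 = 1 := by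
  have := xa hij 0 0
  rw [add_zero] at this
  exact mul_left_cancel (a := x i j hij 0) (by rw [this, mul_one])

private lemma xinv {i j : Fin n} (hij : i ≠ j) (r : ℤ) :
    (x i j hij r)⁻¹ = x i j hij (-r) := by
  apply inv_eq_of_mul_eq_one_right
  rw [xa, add_neg_cancel, x0]

private lemma xa' {i j : Fin n} (hij : i ≠ j) (r s : ℤ) (g : St n) :
    x i j hij r * (x i j hij s * g) = x i j hij (r + s) * g := by
  rw [← mul_assoc, xa]

private lemma xs' {i j p q : Fin n} (hij : i ≠ j) (hpq : p ≠ q) (hjp : j ≠ p)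
    (hiq : i ≠ q) (r s : ℤ) (g : St n) :
    x i j hij r * (x p q hpq s * g) = x p q hpq s * (x i j hij r * g) := by
  rw [← mul_assoc, xs hij hpq hjp hiq, mul_assoc]

private lemma xm' {i j k : Fin n} (hij : i ≠ j) (hjk : j ≠ k) (hik : i ≠ k)
    (r s : ℤ) (g : St n) :
    x i j hij r * (x j k hjk s * g) =
      x i k hik (r * s) * (x j k hjk s * (x i j hij r * g)) := by
  rw [← mul_assoc, xm hij hjk hik, mul_assoc, mul_assoc]

private lemma xm2 {i j k : Fin n} (hij : i ≠ j) (hjk : j ≠ k) (hik : i ≠ k) (r s : ℤ) :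
    x j k hjk s * x i j hij r =
      x i k hik (-(r * s)) * (x i j hij r * x j k hjk s) := by
  have h := xm hij hjk hik r s
  have : x i k hik (-(r*s)) * (x i j hij r * x j k hjk s) =
      x i k hik (-(r*s)) * (x i k hik (r*s) * (x j k hjk s * x i j hij r)) := by rw [← h]
  rw [this, xa', neg_add_cancel, x0, one_mul]

private lemma xm2' {i j k : Fin n} (hij : i ≠ j) (hjk : j ≠ k) (hik : i ≠ k)
    (r s : ℤ) (g : St n) :
    x j k hjk s * (x i j hij r * g) =
      x i k hik (-(r * s)) * (x i j hij r * (x j k hjk s * g)) := by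
  rw [← mul_assoc, xm2 hij hjk hik, mul_assoc, mul_assoc]

private lemma push_t {a t t' : St n} (h : a * t = t' * a) (g : St n) :
    a * (t * g) = t' * (a * g) := by rw [← mul_assoc, h, mul_assoc]

private lemma w_def {i j : Fin n} (hij : i ≠ j) :
    w i j hij = x i j hij (-1) * (x j i hij.symm 1 * x i j hij (-1)) := by
  rw [w, mul_assoc]

private lemma winv {i j : Fin n} (hij : i ≠ j) :
    (w i j hij)⁻¹ = x i j hij 1 * (x j i hij.symm (-1) * x i j hij 1) := by
  rw [w]
  simp only [mul_inv_rev, xinv, neg_neg, mul_assoc]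

private lemma P1 {i j p q : Fin n} (hij : i ≠ j) (hpq : p ≠ q) (hip : i ≠ p)
    (hiq : i ≠ q) (hjp : j ≠ p) (hjq : j ≠ q) (r : ℤ) :
    w i j hij * x p q hpq r = x p q hpq r * w i j hij := by
  rw [w_def, mul_assoc, mul_assoc]
  rw [xs hij hpq hjp hiq]
  rw [xs' hij.symm hpq hip hjq]
  rw [xs' hij hpq hjp hiq]

private lemma P2 {i j k : Fin n} (hij : i ≠ j) (hjk : j ≠ k) (hik : i ≠ k) (r : ℤ) :
    w i j hij * x i k hik r = x j k hjk r * w i j hij := by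
  rw [w_def, mul_assoc, mul_assoc]
  rw [xs hij hik hij.symm hik]
  rw [xm' hij.symm hik hjk 1 r]
  rw [xm' hij hjk hik (-1) (1 * r)]
  rw [xs' hij hik hij.symm hik]
  rw [xs' hjk hik hik.symm hjk]
  rw [xa']
  simp only [one_mul]
  rw [show (-1 : ℤ) * r + r = 0 by ring, x0, one_mul]

private lemma P3 {i j k : Fin n} (hij : i ≠ j) (hjk : j ≠ k) (hik : i ≠ k) (r : ℤ) :
    w i j hij * x k i hik.symm r = x k j hjk.symm r * w i j hij := by
  rw [w_def, mul_assoc, mul_assoc]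
  rw [xm2 hik.symm hij hjk.symm r (-1)]
  simp only [mul_neg_one, neg_neg]
  rw [xm2' hjk.symm hij.symm hik.symm r 1]
  simp only [mul_one, neg_neg]
  rw [xs' hij.symm hik.symm hik hij.symm]
  rw [xm2' hik.symm hij hjk.symm (-r) (-1)]
  simp only [mul_neg_one, neg_neg]
  rw [xs' hij hjk.symm hjk hij]
  rw [xm2' hik.symm hij hjk.symm r (-1)]
  simp only [mul_neg_one, neg_neg]
  rw [xs' hik.symm hjk.symm hik hjk.symm]
  rw [xs' hik.symm hjk.symm hik hjk.symm]
  rw [xa', neg_add_cancel, x0, one_mul]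
  rw [xa', neg_add_cancel, x0, one_mul]

private lemma P4 {i j k : Fin n} (hij : i ≠ j) (hjk : j ≠ k) (hik : i ≠ k) (r : ℤ) :
    w i j hij * x j k hjk r = x i k hik (-r) * w i j hij := by
  rw [w_def, mul_assoc, mul_assoc]
  rw [xm hij hjk hik (-1) r]
  simp only [neg_one_mul]
  rw [xm' hij.symm hik hjk 1 (-r)]
  simp only [one_mul]
  rw [xs' hij.symm hjk hij hjk]
  rw [xs' hik hjk hjk.symm hik]
  rw [xa', neg_add_cancel, x0, one_mul]
  rw [xs' hij hik hij.symm hik]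

private lemma P5 {i j k : Fin n} (hij : i ≠ j) (hjk : j ≠ k) (hik : i ≠ k) (r : ℤ) :
    w i j hij * x k j hjk.symm r = x k i hik.symm (-r) * w i j hij := by
  rw [w_def, mul_assoc, mul_assoc]
  rw [xs hij hjk.symm hjk hij]
  rw [xm2' hjk.symm hij.symm hik.symm r 1]
  simp only [mul_one]
  rw [xm2' hik.symm hij hjk.symm (-r) (-1)]
  simp only [mul_neg_one, neg_neg]
  rw [xs' hij hjk.symm hjk hij]
  rw [xs' hik.symm hjk.symm hik hjk.symm]
  rw [xa', neg_add_cancel, x0, one_mul]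

private lemma xdecomp {i j k : Fin n} (hij : i ≠ j) (hjk : j ≠ k) (hik : i ≠ k) (r : ℤ) :
    x i j hij r =
      x i k hik r * (x k j hjk.symm 1 * (x i k hik (-r) * x k j hjk.symm (-1))) := by
  have h : x i k hik r * (x k j hjk.symm 1 * (x i k hik (-r) * x k j hjk.symm (-1))) =
      x i j hij r := by
    rw [xm' hik hjk.symm hij r 1, xa', add_neg_cancel, x0, one_mul,
      xa hjk.symm 1 (-1), add_neg_cancel, x0, mul_one, mul_one]
  exact h.symm

private lemma P6 {i j k : Fin n} (hij : i ≠ j) (hjk : j ≠ k) (hik : i ≠ k) (r : ℤ) :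
    w i j hij * x i j hij r = x j i hij.symm (-r) * w i j hij := by
  conv_lhs => rw [xdecomp hij hjk hik r]
  rw [push_t (P2 hij hjk hik r)]
  rw [push_t (P5 hij hjk hik 1)]
  rw [push_t (P2 hij hjk hik (-r))]
  rw [P5 hij hjk hik (-1)]
  simp only [neg_neg]
  rw [xm' hjk hik.symm hij.symm r (-1)]
  simp only [mul_neg_one]
  rw [xa', add_neg_cancel, x0, one_mul]
  rw [xa', neg_add_cancel, x0, one_mul]

private lemma P7 {i j k : Fin n} (hij : i ≠ j) (hjk : j ≠ k) (hik : i ≠ k) (r : ℤ) :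
    w i j hij * x j i hij.symm r = x i j hij (-r) * w i j hij := by
  conv_lhs => rw [xdecomp hij.symm hik hjk r]
  rw [push_t (P4 hij hjk hik r)]
  rw [push_t (P3 hij hjk hik 1)]
  rw [push_t (P4 hij hjk hik (-r))]
  rw [P3 hij hjk hik (-1)]
  simp only [neg_neg]
  rw [xm' hik hjk.symm hij (-r) 1]
  simp only [mul_one]
  rw [xa', neg_add_cancel, x0, one_mul]
  rw [xa', add_neg_cancel, x0, one_mul]

private lemma Wcomm {i j s t : Fin n} (hij : i ≠ j) (hst : s ≠ t) (his : i ≠ s)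
    (hit : i ≠ t) (hjs : j ≠ s) (hjt : j ≠ t) :
    w i j hij * w s t hst = w s t hst * w i j hij := by
  rw [w_def hst, mul_assoc, mul_assoc]
  rw [push_t (P1 hij hst his hit hjs hjt (-1))]
  rw [push_t (P1 hij hst.symm hit his hjt hjs 1)]
  rw [P1 hij hst his hit hjs hjt (-1)]

private lemma W2 {i j k : Fin n} (hij : i ≠ j) (hjk : j ≠ k) (hik : i ≠ k) :
    w i j hij * w j i hij.symm = 1 := by
  rw [w_def hij.symm]
  rw [push_t (P7 hij hjk hik (-1))]
  rw [push_t (P6 hij hjk hik 1)]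
  rw [P7 hij hjk hik (-1)]
  simp only [neg_neg]
  rw [w_def hij]
  rw [xa', add_neg_cancel, x0, one_mul]
  rw [xa', neg_add_cancel, x0, one_mul]
  rw [xa, add_neg_cancel, x0]

private lemma W3 {i j b : Fin n} (hij : i ≠ j) (hib : i ≠ b) (hjb : j ≠ b) :
    w i b hib * w i j hij = w b j (fun h => hjb (h.symm)) * w i b hib := by
  have hbj : b ≠ j := fun h => hjb h.symm
  rw [w_def hij]
  rw [push_t (P2 hib hbj hij (-1))]
  rw [push_t (P3 hib hbj hij 1)]
  rw [P2 hib hbj hij (-1)]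
  rw [w_def hbj]
  simp only [mul_assoc]

private lemma W4 {i j b : Fin n} (hij : i ≠ j) (hib : i ≠ b) (hjb : j ≠ b) :
    w j b hjb * w i j hij = w i b hib * w j b hjb := by
  rw [w_def hij]
  rw [push_t (P3 hjb hib.symm hij.symm (-1))]
  rw [push_t (P2 hjb hib.symm hij.symm 1)]
  rw [P3 hjb hib.symm hij.symm (-1)]
  rw [w_def hib]
  simp only [mul_assoc]

private lemma W5 {s t k : Fin n} (hst : s ≠ t) (hsk : s ≠ k) (htk : t ≠ k) :
    hElt s k hsk * w s t hst = (w s t hst)⁻¹ * hElt s k hsk := by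
  have hkt : k ≠ t := fun h => htk h.symm
  have h1 : w s k hsk * w s t hst = w k t hkt * w s k hsk := by
    rw [w_def hst]
    rw [push_t (P2 hsk hkt hst (-1))]
    rw [push_t (P3 hsk hkt hst 1)]
    rw [P2 hsk hkt hst (-1)]
    rw [w_def hkt]
    simp only [mul_assoc]
  have h2 : w s k hsk * w k t hkt = (w s t hst)⁻¹ * w s k hsk := by
    rw [w_def hkt]
    rw [push_t (P4 hsk hkt hst (-1))]
    rw [push_t (P5 hsk hkt hst 1)]
    rw [P4 hsk hkt hst (-1)]
    simp only [neg_neg]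
    rw [winv hst]
    simp only [mul_assoc]
  show w s k hsk * w s k hsk * w s t hst = _ * (w s k hsk * w s k hsk)
  rw [mul_assoc, h1, ← mul_assoc, h2, mul_assoc]

private lemma hElt_def {i j : Fin n} (hij : i ≠ j) :
    hElt i j hij = w i j hij * w i j hij := rfl

private lemma hcomm {i j s t : Fin n} (hij : i ≠ j) (hst : s ≠ t) (his : i ≠ s)
    (hit : i ≠ t) (hjs : j ≠ s) (hjt : j ≠ t) :
    hElt i j hij * hElt s t hst = hElt s t hst * hElt i j hij := by
  have h1 : Commute (w i j hij) (w s t hst) := Wcomm hij hst his hit hjs hjt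
  have h2 : Commute (w i j hij * w i j hij) (w s t hst) := h1.mul_left h1
  have h3 := h2.mul_right h2
  rw [hElt_def, hElt_def]
  exact h3.eq

private lemma hswap {i j k : Fin n} (hij : i ≠ j) (hjk : j ≠ k) (hik : i ≠ k) :
    hElt j i hij.symm = (hElt i j hij)⁻¹ := by
  have h1 : w j i hij.symm = (w i j hij)⁻¹ :=
    eq_inv_of_mul_eq_one_right (W2 hij hjk hik)
  rw [hElt_def, hElt_def, h1, ← mul_inv_rev]

private lemma hpush3 {i j b : Fin n} (hij : i ≠ j) (hib : i ≠ b) (hjb : j ≠ b) :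
    w i b hib * hElt i j hij = hElt b j (fun h => hjb h.symm) * w i b hib := by
  rw [hElt_def, hElt_def]
  rw [push_t (W3 hij hib hjb), W3 hij hib hjb, ← mul_assoc]

private lemma hpush4 {i j b : Fin n} (hij : i ≠ j) (hib : i ≠ b) (hjb : j ≠ b) :
    w j b hjb * hElt i j hij = hElt i b hib * w j b hjb := by
  rw [hElt_def, hElt_def]
  rw [push_t (W4 hij hib hjb), W4 hij hib hjb, ← mul_assoc]

private lemma hconj5 {s t k : Fin n} (hst : s ≠ t) (hsk : s ≠ k) (htk : t ≠ k) :
    hElt s k hsk * hElt s t hst = (hElt s t hst)⁻¹ * hElt s k hsk := by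
  rw [hElt_def hst, push_t (W5 hst hsk htk), W5 hst hsk htk, ← mul_assoc, ← mul_inv_rev]

private lemma fresh (hn : 5 ≤ n) (a b c d : Fin n) :
    ∃ k : Fin n, k ≠ a ∧ k ≠ b ∧ k ≠ c ∧ k ≠ d := by
  by_contra h
  push_neg at h
  have hsub : (Finset.univ : Finset (Fin n)) ⊆ {a, b, c, d} := by
    intro k _
    simp only [Finset.mem_insert, Finset.mem_singleton]
    rcases eq_or_ne k a with h1 | h1; · tauto
    rcases eq_or_ne k b with h2 | h2; · tauto
    rcases eq_or_ne k c with h3 | h3; · tauto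
    exact Or.inr (Or.inr (Or.inr (h k h1 h2 h3)))
  have h4 : ({a, b, c, d} : Finset (Fin n)).card ≤ 4 :=
    le_trans (Finset.card_insert_le _ _) (by
      have := le_trans (Finset.card_insert_le c ({d} : Finset (Fin n)))
        (by rw [Finset.card_singleton])
      have h5 := Finset.card_insert_le b ({c, d} : Finset (Fin n))
      omega)
  have h6 := Finset.card_le_card hsub
  rw [Finset.card_univ, Fintype.card_fin] at h6
  omega

private lemma sqT1 {N : Subgroup (St n)} [N.Normal] {i j b : Fin n}
    (hij : i ≠ j) (hib : i ≠ b) (hjb : j ≠ b)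
    (h : hElt i j hij * hElt i j hij ∈ N) :
    hElt b j (fun h' => hjb h'.symm) * hElt b j (fun h' => hjb h'.symm) ∈ N := by
  have e : w i b hib * (hElt i j hij * hElt i j hij) * (w i b hib)⁻¹ =
      hElt b j (fun h' => hjb h'.symm) * hElt b j (fun h' => hjb h'.symm) := by
    rw [← mul_assoc, hpush3 hij hib hjb, mul_assoc _ (w i b hib), hpush3 hij hib hjb,
      ← mul_assoc, mul_assoc _ _ (w i b hib)⁻¹, mul_inv_cancel, mul_one]
  exact e ▸ Subgroup.Normal.conj_mem ‹N.Normal› _ h (w i b hib)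

private lemma sqT2 {N : Subgroup (St n)} [N.Normal] {i j b : Fin n}
    (hij : i ≠ j) (hib : i ≠ b) (hjb : j ≠ b)
    (h : hElt i j hij * hElt i j hij ∈ N) :
    hElt i b hib * hElt i b hib ∈ N := by
  have e : w j b hjb * (hElt i j hij * hElt i j hij) * (w j b hjb)⁻¹ =
      hElt i b hib * hElt i b hib := by
    rw [← mul_assoc, hpush4 hij hib hjb, mul_assoc _ (w j b hjb), hpush4 hij hib hjb,
      ← mul_assoc, mul_assoc _ _ (w j b hjb)⁻¹, mul_inv_cancel, mul_one]
  exact e ▸ Subgroup.Normal.conj_mem ‹N.Normal› _ h (w j b hjb)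

private lemma sqSwap {N : Subgroup (St n)} {i j k : Fin n}
    (hij : i ≠ j) (hjk : j ≠ k) (hik : i ≠ k)
    (h : hElt i j hij * hElt i j hij ∈ N) :
    hElt j i hij.symm * hElt j i hij.symm ∈ N := by
  have e : hElt j i hij.symm * hElt j i hij.symm = (hElt i j hij * hElt i j hij)⁻¹ := by
    rw [hswap hij hjk hik, ← mul_inv_rev]
  rw [e]
  exact inv_mem h

private lemma sqAll {N : Subgroup (St n)} [N.Normal] (hn : 5 ≤ n) {i j p q : Fin n}
    (hij : i ≠ j) (hpq : p ≠ q)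
    (h : hElt i j hij * hElt i j hij ∈ N) :
    hElt p q hpq * hElt p q hpq ∈ N := by
  obtain ⟨k, hk1, hk2, hk3, hk4⟩ := fresh hn i j p q
  by_cases hjq : j = q
  · subst hjq
    by_cases hip : i = p
    · subst hip; exact h
    · exact sqT1 hij hip hpq.symm h
  · by_cases hiq : i = q
    · subst hiq
      have h2 := sqSwap hij hk2.symm hk1.symm h
      by_cases hjp : j = p
      · subst hjp; exact h2
      · exact sqT1 hij.symm hjp hpq.symm h2
    · have h2 := sqT2 hij hiq hjq h
      by_cases hip : i = p
      · subst hip; exact h2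
      · exact sqT1 hiq hip hpq.symm h2

end Steinberg

open Steinberg in
/-- For `n ≥ 5` and pairwise distinct `i,j,s,t`, the normal subgroup of `St_n(ℤ)`
normally generated by `h_{ij}·h_{st}` contains `a = h_{12}²`. -/
theorem steinberg_normalClosure_hh_contains_a (n : ℕ) (hn : 5 ≤ n) (i j s t : Fin n)
    (hij : i ≠ j) (hst : s ≠ t) (his : i ≠ s) (hit : i ≠ t)
    (hjs : j ≠ s) (hjt : j ≠ t) :
    aElt (by omega) ∈
      Subgroup.normalClosure ({hElt i j hij * hElt s t hst} : Set (St n)) := by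
  set N := Subgroup.normalClosure ({hElt i j hij * hElt s t hst} : Set (St n)) with hNdef
  have hNn : N.Normal := Subgroup.normalClosure_normal
  have hg : hElt i j hij * hElt s t hst ∈ N :=
    Subgroup.subset_normalClosure rfl
  obtain ⟨k, hki, hkj, hks, hkt⟩ := Steinberg.fresh hn i j s t
  have hsk : s ≠ k := hks.symm
  have e1 : hElt s k hsk * (hElt i j hij * hElt s t hst) * (hElt s k hsk)⁻¹ =
      hElt i j hij * (hElt s t hst)⁻¹ := by
    rw [← mul_assoc, Steinberg.hcomm hsk hij his.symm hjs.symm hki hkj,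
      mul_assoc (hElt i j hij), Steinberg.hconj5 hst hsk hkt.symm,
      ← mul_assoc, mul_assoc _ (hElt s k hsk), mul_inv_cancel, mul_one]
  have m2 : hElt i j hij * (hElt s t hst)⁻¹ ∈ N :=
    e1 ▸ hNn.conj_mem _ hg (hElt s k hsk)
  have m3 := N.mul_mem hg m2
  have e2 : (hElt i j hij * hElt s t hst) * (hElt i j hij * (hElt s t hst)⁻¹) =
      hElt i j hij * hElt i j hij := by
    rw [mul_assoc, ← mul_assoc (hElt s t hst),
      Steinberg.hcomm hst hij his.symm hjs.symm hit.symm hjt.symm,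
      mul_assoc (hElt i j hij), mul_inv_cancel, mul_one]
  have m4 : hElt i j hij * hElt i j hij ∈ N := e2 ▸ m3
  have hzo : (⟨0, by omega⟩ : Fin n) ≠ (⟨1, by omega⟩ : Fin n) := by
    simp [Fin.ext_iff]
  rw [Steinberg.aElt, pow_two]
  exact Steinberg.sqAll hn hij hzo m4
end
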